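/- The averaged two-bin calibration error is rank-preserving: for every positive integer T, every p ∈ [0,1]^T, and every pair of prediction sequences r_1, r_2 ∈ [0,1]^T, E_{y~p}[ATB(r_1,y)] − E_{y~p}[ATB(r_2,y)] = ATB(r_1,p) − ATB(r_2,p). -/

import Mathlib

open MeasureTheory Finset

noncomputable section

/-- Expectation over independent Bernoulli states `y ~ p`: each `y t ∈ {0,1}` is drawn
independently with mean `p t`. -/
def bernExp {T : ℕ} (p : Fin T → ℝ) (f : (Fin T → ℝ) → ℝ) : ℝ :=
  ∑ y : Fin T → Bool, (∏ t, if y t then p t else 1 - p t) * f (fun t => if y t then 1 else 0)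

/-- Averaged two-bin calibration error of predictions `r` w.r.t. states (or probabilities) `y`:
the bin boundary `q` is uniform on `[0,1]`. -/
def atbSeq {T : ℕ} (r y : Fin T → ℝ) : ℝ :=
  ∫ q in (0:ℝ)..1, (1 / (T:ℝ)^2) *
    ((∑ t, if r t < q then (r t - y t) else 0)^2 +
     (∑ t, if q ≤ r t then (r t - y t) else 0)^2)

namespace ATB
variable {T : ℕ}

def W (p : Fin T → ℝ) (y : Fin T → Bool) : ℝ := ∏ t, if y t then p t else 1 - p t

def dd (p : Fin T → ℝ) (t : Fin T) (y : Fin T → Bool) : ℝ := p t - (if y t then 1 else 0)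

lemma expQ (f : (Fin T → Bool) → ℝ) (g : Fin T → Bool → ℝ)
    (h : ∀ y, f y = ∏ t, g t (y t)) :
    ∑ y : Fin T → Bool, f y = ∏ t, (g t false + g t true) := by
  calc ∑ y : Fin T → Bool, f y = ∑ y : Fin T → Bool, ∏ t, g t (y t) := by simp only [h]
    _ = _ := by
        rw [← Fintype.piFinset_univ, ← Finset.prod_univ_sum]
        simp [Fintype.sum_bool, add_comm]

lemma sum_W (p : Fin T → ℝ) : ∑ y : Fin T → Bool, W p y = 1 := by
  rw [expQ (W p) (fun t b => if b then p t else 1 - p t) (fun y => rfl)]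
  simp

lemma E_one (p : Fin T → ℝ) (t0 : Fin T) :
    ∑ y : Fin T → Bool, W p y * dd p t0 y = 0 := by
  rw [expQ _ (fun t b => (if b then p t else 1 - p t) *
      (if t = t0 then p t0 - (if b then 1 else 0) else 1)) ?_]
  · apply Finset.prod_eq_zero (Finset.mem_univ t0)
    simp; ring
  · intro y
    show W p y * dd p t0 y = _
    rw [Finset.prod_mul_distrib]
    congr 1
    rw [Finset.prod_ite_eq' Finset.univ t0 (fun x => p t0 - (if y x then (1:ℝ) else 0))]
    simp [dd]

lemma E_pair (p : Fin T → ℝ) (s t0 : Fin T) :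
    ∑ y : Fin T → Bool, W p y * (dd p s y * dd p t0 y)
      = if s = t0 then p s * (1 - p s) else 0 := by
  by_cases hst : s = t0
  · subst hst
    rw [expQ _ (fun t b => (if b then p t else 1 - p t) *
        (if t = s then (p s - (if b then 1 else 0)) * (p s - (if b then 1 else 0)) else 1)) ?_]
    · trans (∏ u : Fin T, if u = s then p s * (1 - p s) else 1)
      · exact Finset.prod_congr rfl fun u _ => by by_cases h : u = s <;> simp [h] <;> ring
      · rw [Finset.prod_ite_eq' Finset.univ s (fun _ => p s * (1 - p s))]
        simp
    · intro y
      show W p y * (dd p s y * dd p s y) = _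
      rw [Finset.prod_mul_distrib]
      congr 1
      rw [Finset.prod_ite_eq' Finset.univ s
        (fun x => (p s - (if y x then (1:ℝ) else 0)) * (p s - (if y x then (1:ℝ) else 0)))]
      simp [dd]
  · rw [expQ _ (fun t b => (if b then p t else 1 - p t) *
        ((if t = s then p s - (if b then 1 else 0) else 1) *
         (if t = t0 then p t0 - (if b then 1 else 0) else 1))) ?_]
    · rw [if_neg hst]
      apply Finset.prod_eq_zero (Finset.mem_univ s)
      simp [hst]; ring
    · intro y
      show W p y * (dd p s y * dd p t0 y) = _
      rw [Finset.prod_mul_distrib, Finset.prod_mul_distrib]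
      congr 1
      rw [Finset.prod_ite_eq' Finset.univ s (fun x => p s - (if y x then (1:ℝ) else 0)),
          Finset.prod_ite_eq' Finset.univ t0 (fun x => p t0 - (if y x then (1:ℝ) else 0))]
      simp [dd]

lemma exp_sq (p r : Fin T → ℝ) (S : Finset (Fin T)) :
    ∑ y : Fin T → Bool, W p y * (∑ t ∈ S, (r t - (if y t then 1 else 0)))^2
      = (∑ t ∈ S, (r t - p t))^2 + ∑ t ∈ S, p t * (1 - p t) := by
  set A := ∑ t ∈ S, (r t - p t) with hA
  have hy : ∀ y : Fin T → Bool,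
      (∑ t ∈ S, (r t - (if y t then (1:ℝ) else 0))) = A + ∑ t ∈ S, dd p t y := by
    intro y
    rw [hA, ← Finset.sum_add_distrib]
    exact Finset.sum_congr rfl fun t _ => by simp only [dd]; ring
  have expand : ∀ y : Fin T → Bool,
      W p y * (∑ t ∈ S, (r t - (if y t then (1:ℝ) else 0)))^2
        = W p y * A^2 + (2*A) * (W p y * (∑ t ∈ S, dd p t y))
          + W p y * (∑ s ∈ S, ∑ t ∈ S, dd p s y * dd p t y) := by
    intro y
    rw [hy y, ← Finset.sum_mul_sum]
    ring
  have e1 : ∑ y : Fin T → Bool, W p y * A^2 = A^2 := by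
    rw [← Finset.sum_mul, sum_W, one_mul]
  have e2 : ∑ y : Fin T → Bool, W p y * (∑ t ∈ S, dd p t y) = 0 := by
    calc ∑ y : Fin T → Bool, W p y * (∑ t ∈ S, dd p t y)
        = ∑ y : Fin T → Bool, ∑ t ∈ S, W p y * dd p t y := by simp only [Finset.mul_sum]
      _ = ∑ t ∈ S, ∑ y : Fin T → Bool, W p y * dd p t y := Finset.sum_comm
      _ = 0 := by simp [E_one]
  have e3 : ∑ y : Fin T → Bool, W p y * (∑ s ∈ S, ∑ t ∈ S, dd p s y * dd p t y)
      = ∑ t ∈ S, p t * (1 - p t) := by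
    calc ∑ y : Fin T → Bool, W p y * (∑ s ∈ S, ∑ t ∈ S, dd p s y * dd p t y)
        = ∑ s ∈ S, ∑ y : Fin T → Bool, ∑ t ∈ S, W p y * (dd p s y * dd p t y) := by
          simp only [Finset.mul_sum]; exact Finset.sum_comm
      _ = ∑ s ∈ S, ∑ t ∈ S, ∑ y : Fin T → Bool, W p y * (dd p s y * dd p t y) := by
          exact Finset.sum_congr rfl fun s _ => Finset.sum_comm
      _ = ∑ s ∈ S, ∑ t ∈ S, if s = t then p s * (1 - p s) else 0 := by
          simp only [E_pair]
      _ = ∑ s ∈ S, if s ∈ S then p s * (1 - p s) else 0 :=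
          Finset.sum_congr rfl fun s _ => Finset.sum_ite_eq S s (fun _ => p s * (1 - p s))
      _ = ∑ t ∈ S, p t * (1 - p t) := Finset.sum_congr rfl fun s hs => by rw [if_pos hs]
  simp only [expand]
  rw [Finset.sum_add_distrib, Finset.sum_add_distrib, e1, ← Finset.mul_sum, e2, e3]
  ring

def F (r y : Fin T → ℝ) (q : ℝ) : ℝ :=
  (1 / (T:ℝ)^2) *
    ((∑ t, if r t < q then (r t - y t) else 0)^2 +
     (∑ t, if q ≤ r t then (r t - y t) else 0)^2)

lemma meas_F (r y : Fin T → ℝ) : Measurable (F r y) := by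
  apply Measurable.const_mul
  apply Measurable.add
  · apply Measurable.pow_const
    apply Finset.measurable_sum
    intro t _
    exact Measurable.ite (measurableSet_Ioi (a := r t)) measurable_const measurable_const
  · apply Measurable.pow_const
    apply Finset.measurable_sum
    intro t _
    exact Measurable.ite (measurableSet_Iic (a := r t)) measurable_const measurable_const

lemma bound_F (r y : Fin T → ℝ) (q : ℝ) :
    ‖F r y q‖ ≤ (1 / (T:ℝ)^2) * (2 * (∑ t, |r t - y t|)^2) := by
  set B := ∑ t, |r t - y t| with hB
  have hB0 : 0 ≤ B := Finset.sum_nonneg fun t _ => abs_nonneg _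
  have habs : ∀ (c : Fin T → Prop) (_ : DecidablePred c),
      |∑ t, if c t then (r t - y t) else 0| ≤ B := by
    intro c hc
    refine (Finset.abs_sum_le_sum_abs _ _).trans ?_
    apply Finset.sum_le_sum
    intro t _
    by_cases h : c t <;> simp [h, abs_nonneg]
  have hsq : ∀ (c : Fin T → Prop) (hc : DecidablePred c),
      (∑ t, if c t then (r t - y t) else 0)^2 ≤ B^2 := by
    intro c hc
    have := habs c hc
    calc (∑ t, if c t then (r t - y t) else 0)^2
        = |∑ t, if c t then (r t - y t) else 0|^2 := (sq_abs _).symm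
      _ ≤ B^2 := pow_le_pow_left₀ (abs_nonneg _) (habs c hc) 2
  rw [F, Real.norm_eq_abs, abs_mul, abs_of_nonneg (by positivity : (0:ℝ) ≤ 1 / (T:ℝ)^2)]
  apply mul_le_mul_of_nonneg_left _ (by positivity)
  rw [abs_of_nonneg (by positivity)]
  have h1 := hsq (fun t => r t < q) inferInstance
  have h2 := hsq (fun t => q ≤ r t) inferInstance
  nlinarith

lemma intble_F (r y : Fin T → ℝ) : IntervalIntegrable (F r y) volume 0 1 := by
  rw [intervalIntegrable_iff_integrableOn_Ioc_of_le zero_le_one]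
  have hc : MeasureTheory.IntegrableOn
      (fun _ : ℝ => (1 / (T:ℝ)^2) * (2 * (∑ t, |r t - y t|)^2)) (Set.Ioc 0 1) volume := by
    refine integrableOn_const ?_ ?_
    · exact measure_Ioc_lt_top.ne
    · exact enorm_ne_top
  exact hc.mono' ((meas_F r y).aestronglyMeasurable.restrict)
    (Filter.Eventually.of_forall fun q => bound_F r y q)


lemma key (p r : Fin T → ℝ) (q : ℝ) :
    ∑ y : Fin T → Bool, W p y * F r (fun t => if y t then 1 else 0) q
      = F r p q + (1 / (T:ℝ)^2) * ∑ t, p t * (1 - p t) := by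
  classical
  set S1 := Finset.univ.filter (fun t => r t < q) with hS1
  set S2 := Finset.univ.filter (fun t => q ≤ r t) with hS2
  have conv : ∀ (y : Fin T → ℝ), F r y q
      = (1/(T:ℝ)^2) * ((∑ t ∈ S1, (r t - y t))^2 + (∑ t ∈ S2, (r t - y t))^2) := by
    intro y; rw [F, hS1, hS2, Finset.sum_filter, Finset.sum_filter]
  simp only [conv]
  have split : ∀ y : Fin T → Bool,
      W p y * ((1/(T:ℝ)^2) * ((∑ t ∈ S1, (r t - if y t then (1:ℝ) else 0))^2
          + (∑ t ∈ S2, (r t - if y t then (1:ℝ) else 0))^2))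
      = (1/(T:ℝ)^2) * (W p y * (∑ t ∈ S1, (r t - if y t then (1:ℝ) else 0))^2)
        + (1/(T:ℝ)^2) * (W p y * (∑ t ∈ S2, (r t - if y t then (1:ℝ) else 0))^2) := by
    intro y; ring
  simp only [split]
  rw [Finset.sum_add_distrib, ← Finset.mul_sum, ← Finset.mul_sum, exp_sq, exp_sq]
  have hpart : ∑ t ∈ S1, p t * (1 - p t) + ∑ t ∈ S2, p t * (1 - p t)
      = ∑ t, p t * (1 - p t) := by
    rw [hS1, hS2, Finset.sum_filter, Finset.sum_filter, ← Finset.sum_add_distrib]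
    refine Finset.sum_congr rfl fun t _ => ?_
    by_cases h : r t < q
    · simp [h, not_le.mpr h]
    · simp [h, not_lt.1 h]
  rw [← hpart]; ring

lemma bern_atb (p r : Fin T → ℝ) :
    bernExp p (fun y => atbSeq r y)
      = atbSeq r p + (1/(T:ℝ)^2) * ∑ t, p t * (1 - p t) := by
  have hatb : ∀ y : Fin T → ℝ, atbSeq r y = ∫ q in (0:ℝ)..1, F r y q := fun y => rfl
  rw [bernExp]
  simp only [hatb]
  calc ∑ y : Fin T → Bool, (∏ t, if y t then p t else 1 - p t)
          * ∫ q in (0:ℝ)..1, F r (fun t => if y t then 1 else 0) q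
      = ∑ y : Fin T → Bool, ∫ q in (0:ℝ)..1, W p y * F r (fun t => if y t then 1 else 0) q := by
        refine Finset.sum_congr rfl fun y _ => ?_
        rw [intervalIntegral.integral_const_mul]
        rfl
    _ = ∫ q in (0:ℝ)..1, ∑ y : Fin T → Bool, W p y * F r (fun t => if y t then 1 else 0) q := by
        rw [intervalIntegral.integral_finset_sum]
        intro y _
        exact (intble_F r _).const_mul _
    _ = ∫ q in (0:ℝ)..1, (F r p q + (1/(T:ℝ)^2) * ∑ t, p t * (1 - p t)) :=
        intervalIntegral.integral_congr fun q _ => key p r q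
    _ = (∫ q in (0:ℝ)..1, F r p q)
          + ∫ q in (0:ℝ)..1, (1/(T:ℝ)^2) * ∑ t, p t * (1 - p t) :=
        intervalIntegral.integral_add (intble_F r p) intervalIntegrable_const
    _ = atbSeq r p + (1/(T:ℝ)^2) * ∑ t, p t * (1 - p t) := by
        rw [intervalIntegral.integral_const]
        simp [hatb p]


end ATB

/-- The averaged two-bin calibration error is rank-preserving. -/
theorem atb_rank_preserving (T : ℕ) (hT : 0 < T) (p r₁ r₂ : Fin T → ℝ)
    (hp : ∀ t, p t ∈ Set.Icc (0:ℝ) 1)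
    (hr₁ : ∀ t, r₁ t ∈ Set.Icc (0:ℝ) 1) (hr₂ : ∀ t, r₂ t ∈ Set.Icc (0:ℝ) 1) :
    bernExp p (fun y => atbSeq r₁ y) - bernExp p (fun y => atbSeq r₂ y)
      = atbSeq r₁ p - atbSeq r₂ p := by
  rw [ATB.bern_atb p r₁, ATB.bern_atb p r₂]
  ring

end
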